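/- For every integer n ≥ 3, one has the identity n·(∂A_{n−1}/∂π) = (n−1)·(∂A_n/∂w) as polynomials in the variables w and π. -/
import Mathlib


open MvPolynomial

/-- The bivariate polynomial
`A_n(w,π) = Σ_{k=0}^{⌊n/2⌋} (n/(n−k))·binom(n−k, k)·w^k·π^{n−2k}` over ℚ,
where `w = X 0` and `π = X 1`. -/
noncomputable def A (n : ℕ) : MvPolynomial (Fin 2) ℚ :=
  ∑ k ∈ Finset.range (n / 2 + 1),
    C ((n : ℚ) / ((n : ℚ) - (k : ℚ)) * (((n - k).choose k : ℕ) : ℚ)) *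
      X 0 ^ k * X 1 ^ (n - 2 * k)

lemma term_eq (a : ℚ) (k m : ℕ) :
    (C a * X 0 ^ k * X 1 ^ m : MvPolynomial (Fin 2) ℚ)
      = monomial (Finsupp.single 0 k + Finsupp.single 1 m) a := by
  simp [X_pow_eq_monomial, C_mul_monomial, monomial_mul]

lemma sub1 (k m : ℕ) :
    (Finsupp.single (0:Fin 2) k + Finsupp.single 1 m) - Finsupp.single 1 1
      = Finsupp.single 0 k + Finsupp.single 1 (m-1) := by
  ext a; fin_cases a <;> simp [Finsupp.single_apply]

lemma sub0 (k m : ℕ) :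
    (Finsupp.single (0:Fin 2) k + Finsupp.single 1 m) - Finsupp.single 0 1
      = Finsupp.single 0 (k-1) + Finsupp.single 1 m := by
  ext a; fin_cases a <;> simp [Finsupp.single_apply]

theorem pderiv_pi_A_pred (n : ℕ) (hn : 3 ≤ n) :
    C (n : ℚ) * pderiv (1 : Fin 2) (A (n - 1))
      = C ((n : ℚ) - 1) * pderiv (0 : Fin 2) (A n) := by
  have hL : C (n : ℚ) * pderiv (1 : Fin 2) (A (n - 1))
      = ∑ k ∈ Finset.range ((n-1) / 2 + 1),
        monomial (Finsupp.single 0 k + Finsupp.single 1 ((n-1) - 2*k - 1))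
          ((n:ℚ) * ((((n-1:ℕ)) : ℚ) / (((n-1:ℕ) : ℚ) - (k : ℚ)) * ((((n-1) - k).choose k : ℕ) : ℚ)
            * (((n-1) - 2*k : ℕ) : ℚ))) := by
    rw [A]
    simp only [term_eq, map_sum, pderiv_monomial, Finset.mul_sum, C_mul_monomial, sub1]
    refine Finset.sum_congr rfl fun k hk => ?_
    simp [Finsupp.single_apply]
  have hR : C ((n : ℚ) - 1) * pderiv (0 : Fin 2) (A n)
      = ∑ k ∈ Finset.range (n / 2 + 1),
        monomial (Finsupp.single 0 (k-1) + Finsupp.single 1 (n - 2*k))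
          (((n:ℚ) - 1) * ((n : ℚ) / ((n : ℚ) - (k : ℚ)) * (((n - k).choose k : ℕ) : ℚ) * (k:ℚ))) := by
    rw [A]
    simp only [term_eq, map_sum, pderiv_monomial, Finset.mul_sum, C_mul_monomial, sub0]
    refine Finset.sum_congr rfl fun k hk => ?_
    simp [Finsupp.single_apply]
  rw [hL, hR]
  conv_rhs => rw [Finset.sum_range_succ']
  simp only [Nat.cast_zero, mul_zero, map_zero, add_zero]
  have key : ∀ k, 2*(k+1) ≤ n →
      (monomial (Finsupp.single (0:Fin 2) k + Finsupp.single 1 ((n-1) - 2*k - 1))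
        ((n:ℚ) * (((n-1:ℕ) : ℚ) / (((n-1:ℕ) : ℚ) - (k : ℚ)) * ((((n-1) - k).choose k : ℕ) : ℚ)
          * (((n-1) - 2*k : ℕ) : ℚ))) : MvPolynomial (Fin 2) ℚ)
      = monomial (Finsupp.single 0 (k+1-1) + Finsupp.single 1 (n - 2*(k+1)))
        (((n:ℚ) - 1) * ((n : ℚ) / ((n : ℚ) - ((k+1:ℕ):ℚ)) * (((n - (k+1)).choose (k+1) : ℕ) : ℚ) * ((k+1:ℕ):ℚ))) := by
    intro k hk
    have h1 : 1 ≤ n := by omega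
    have hexp : (n-1) - 2*k - 1 = n - 2*(k+1) := by omega
    have hch : ((n - (k+1)).choose (k+1)) * (k+1) = ((n-1) - k).choose k * ((n-1) - 2*k) := by
      have h := Nat.choose_succ_right_eq ((n-1) - k) k
      have h2 : n - (k+1) = (n-1) - k := by omega
      have h3 : (n-1) - k - k = (n-1) - 2*k := by omega
      rw [h2, h, h3]
    have hcast : (((n - (k+1)).choose (k+1) : ℕ) : ℚ) * ((k+1:ℕ):ℚ)
        = ((((n-1) - k).choose k : ℕ) : ℚ) * (((n-1) - 2*k : ℕ):ℚ) := by
      exact_mod_cast congrArg (Nat.cast : ℕ → ℚ) hch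
    have hd : ((n-1:ℕ) : ℚ) - (k:ℚ) = (n:ℚ) - ((k+1:ℕ):ℚ) := by push_cast [h1]; ring
    rw [hexp, Nat.add_sub_cancel]
    congr 1
    have hk1 : k ≤ n - 1 := by omega
    have hk2 : 2*k ≤ n - 1 := by omega
    rw [← hd]
    push_cast [Nat.cast_sub h1, Nat.cast_sub hk1, Nat.cast_sub hk2] at hcast ⊢
    have hkq : (k:ℚ) + 2 ≤ (n:ℚ) := by exact_mod_cast (show k + 2 ≤ n by omega)
    have hD : (n:ℚ) - 1 - (k:ℚ) ≠ 0 := by intro h; linarith [h]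
    rw [show (n:ℚ) * (((n:ℚ)-1) / ((n:ℚ)-1-(k:ℚ)) * (((n - 1 - k).choose k : ℕ):ℚ) * ((n:ℚ)-1-2*(k:ℚ)))
        = ((n:ℚ)*((n:ℚ)-1)*(((n - 1 - k).choose k : ℕ):ℚ)*((n:ℚ)-1-2*(k:ℚ))) / ((n:ℚ)-1-(k:ℚ)) from by ring,
      show ((n:ℚ)-1) * ((n:ℚ) / ((n:ℚ)-1-(k:ℚ)) * (((n - (k+1)).choose (k+1) : ℕ):ℚ) * ((k:ℚ)+1))
        = (((n:ℚ)-1)*(n:ℚ)*(((n - (k+1)).choose (k+1) : ℕ):ℚ)*((k:ℚ)+1)) / ((n:ℚ)-1-(k:ℚ)) from by ring,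
      div_eq_div_iff hD hD]
    linear_combination (-(n:ℚ)*((n:ℚ)-1)*((n:ℚ)-1-(k:ℚ))) * hcast
  rcases Nat.even_or_odd n with he | ho
  · obtain ⟨m, hm⟩ := he
    have hr : (n-1)/2 + 1 = n/2 := by omega
    rw [hr]
    exact Finset.sum_congr rfl fun k hk => key k (by
      have := Finset.mem_range.mp hk; omega)
  · obtain ⟨m, hm⟩ := ho
    have hr : (n-1)/2 + 1 = n/2 + 1 := by omega
    rw [hr, Finset.sum_range_succ]
    have hz : ((n-1) - 2*(n/2) : ℕ) = 0 := by omega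
    rw [hz]
    simp only [Nat.cast_zero, mul_zero, map_zero, add_zero]
    exact Finset.sum_congr rfl fun k hk => key k (by
      have := Finset.mem_range.mp hk; omega)
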